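/- Let u : ℝ × ℝ → ℝ be twice continuously differentiable, let ρ, s : ℝ³ → ℝ be continuously differentiable with ρ(x) > 0 for all x, and let v : ℝ³ → ℝ³ be continuously differentiable. Define p(x) := ρ(x)² ∂₁u(ρ(x), s(x)), T(x) := ∂₂u(ρ(x), s(x)), and h(x) := u(ρ(x), s(x)) + p(x)/ρ(x). Then at every x ∈ ℝ³: −(Grad v) v − (1/ρ) grad p = −grad( (1/2)‖v‖² + h ) − (curl v) × v + T grad s. -/

import Mathlib

open MeasureTheory Matrix

noncomputable section

/-- Points of ℝ³. -/
abbrev R3 : Type := Fin 3 → ℝ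

/-- Partial derivative `∂f/∂xᵢ` of a scalar field. -/
def pd (i : Fin 3) (f : R3 → ℝ) (x : R3) : ℝ := fderiv ℝ f x (Pi.single i 1)

/-- Gradient of a scalar field. -/
def grad (f : R3 → ℝ) (x : R3) : R3 := fun i => pd i f x

/-- Divergence of a vector field. -/
def vdiv (u : R3 → R3) (x : R3) : ℝ := ∑ i, pd i (fun y => u y i) x

/-- Jacobian matrix `(Grad u)ᵢⱼ = ∂uᵢ/∂xⱼ` of a vector field. -/
def vGrad (u : R3 → R3) (x : R3) : Matrix (Fin 3) (Fin 3) ℝ :=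
  Matrix.of fun i j => pd j (fun y => u y i) x

/-- Divergence `(Div A)ⱼ = ∑ᵢ ∂Aᵢⱼ/∂xᵢ` of a matrix field. -/
def mDiv (A : R3 → Matrix (Fin 3) (Fin 3) ℝ) (x : R3) : R3 :=
  fun j => ∑ i, pd i (fun y => A y i j) x

/-- Frobenius inner product `A : B = ∑ᵢⱼ Aᵢⱼ Bᵢⱼ`. -/
def frob (A B : Matrix (Fin 3) (Fin 3) ℝ) : ℝ := ∑ i, ∑ j, A i j * B i j

/-- Curl of a vector field. -/
def curl (u : R3 → R3) (x : R3) : R3 :=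
  ![pd 1 (fun y => u y 2) x - pd 2 (fun y => u y 1) x,
    pd 2 (fun y => u y 0) x - pd 0 (fun y => u y 2) x,
    pd 0 (fun y => u y 1) x - pd 1 (fun y => u y 0) x]

/-- Cross product on ℝ³. -/
def cross (u v : R3) : R3 :=
  ![u 1 * v 2 - u 2 * v 1, u 2 * v 0 - u 0 * v 2, u 0 * v 1 - u 1 * v 0]

section helpers

variable {f g : R3 → ℝ} {x : R3} {i : Fin 3}

lemma pd_add (hf : DifferentiableAt ℝ f x) (hg : DifferentiableAt ℝ g x) :
    pd i (fun y => f y + g y) x = pd i f x + pd i g x := by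
  simp [pd, fderiv_fun_add hf hg]

lemma pd_mul (hf : DifferentiableAt ℝ f x) (hg : DifferentiableAt ℝ g x) :
    pd i (fun y => f y * g y) x = f x * pd i g x + g x * pd i f x := by
  simp [pd, fderiv_fun_mul hf hg]

lemma pd_const_mul (c : ℝ) (hf : DifferentiableAt ℝ f x) :
    pd i (fun y => c * f y) x = c * pd i f x := by
  simp [pd, fderiv_const_mul hf c]

lemma pd_inv (hf : DifferentiableAt ℝ f x) (h0 : f x ≠ 0) :
    pd i (fun y => (f y)⁻¹) x = -((f x) ^ 2)⁻¹ * pd i f x := by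
  have H : HasFDerivAt (fun y => (f y)⁻¹) ((-(f x ^ 2)⁻¹) • fderiv ℝ f x) x :=
    (hasDerivAt_inv h0).comp_hasFDerivAt x hf.hasFDerivAt
  simp [pd, H.fderiv]

lemma pd_comp2 (w : ℝ × ℝ → ℝ) (hw : DifferentiableAt ℝ w (f x, g x))
    (hf : DifferentiableAt ℝ f x) (hg : DifferentiableAt ℝ g x) :
    pd i (fun y => w (f y, g y)) x
      = fderiv ℝ w (f x, g x) (1, 0) * pd i f x
        + fderiv ℝ w (f x, g x) (0, 1) * pd i g x := by
  have hfg : DifferentiableAt ℝ (fun y => (f y, g y)) x := hf.prodMk hg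
  have H : fderiv ℝ (fun y => w (f y, g y)) x
      = (fderiv ℝ w (f x, g x)).comp (fderiv ℝ (fun y => (f y, g y)) x) := by
    rw [show (fun y => w (f y, g y)) = w ∘ (fun y => (f y, g y)) from rfl]
    exact fderiv_comp x hw hfg
  have hp : fderiv ℝ (fun y => (f y, g y)) x
      = (fderiv ℝ f x).prod (fderiv ℝ g x) := hf.fderiv_prodMk hg
  have key : ∀ a b : ℝ, fderiv ℝ w (f x, g x) (a, b)
      = a * fderiv ℝ w (f x, g x) (1, 0) + b * fderiv ℝ w (f x, g x) (0, 1) := by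
    intro a b
    have hab : (a, b) = a • ((1 : ℝ), (0 : ℝ)) + b • ((0 : ℝ), (1 : ℝ)) := by
      simp [Prod.ext_iff]
    rw [hab, map_add, _root_.map_smul, _root_.map_smul, smul_eq_mul, smul_eq_mul]
  simp only [pd, H, hp, ContinuousLinearMap.comp_apply, ContinuousLinearMap.prod_apply]
  rw [key]
  ring

end helpers

/-- Rewriting of the convective and pressure terms of the momentum equation:
`−(Grad v) v − (1/ρ) grad p = −grad((1/2)‖v‖² + h) − (curl v) × v + T grad s`,
with `p = ρ² ∂₁u(ρ,s)`, `T = ∂₂u(ρ,s)` and `h = u(ρ,s) + p/ρ`. -/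
theorem stmt11 (u : ℝ × ℝ → ℝ) (hu : ContDiff ℝ 2 u)
    (ρ s : R3 → ℝ) (hρ : ContDiff ℝ 1 ρ) (hs : ContDiff ℝ 1 s)
    (hρpos : ∀ x, 0 < ρ x)
    (v : R3 → R3) (hv : ContDiff ℝ 1 v)
    (p T h : R3 → ℝ)
    (hp : ∀ x, p x = ρ x ^ 2 * fderiv ℝ u (ρ x, s x) (1, 0))
    (hT : ∀ x, T x = fderiv ℝ u (ρ x, s x) (0, 1))
    (hh : ∀ x, h x = u (ρ x, s x) + p x / ρ x) :
    ∀ x : R3,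
      - (vGrad v x *ᵥ v x) - (ρ x)⁻¹ • grad p x
        = - grad (fun y => (1/2) * (v y ⬝ᵥ v y) + h y) x
          - cross (curl v x) (v x) + T x • grad s x := by
  
  intro x
  have hρx : ρ x ≠ 0 := (hρpos x).ne'
  have hρd : DifferentiableAt ℝ ρ x := (hρ.differentiable one_ne_zero).differentiableAt
  have hsd : DifferentiableAt ℝ s x := (hs.differentiable one_ne_zero).differentiableAt
  have hvd : ∀ j, DifferentiableAt ℝ (fun y => v y j) x := fun j =>
    (differentiableAt_pi.mp ((hv.differentiable one_ne_zero).differentiableAt)) j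
  have hud : DifferentiableAt ℝ u (ρ x, s x) :=
    (hu.differentiable (by norm_num)).differentiableAt
  have hUcomp : DifferentiableAt ℝ (fun y => u (ρ y, s y)) x :=
    hud.comp x (hρd.prodMk hsd)
  have hpfun : p = fun y => ρ y ^ 2 * fderiv ℝ u (ρ y, s y) (1, 0) := funext hp
  have hpC : ContDiff ℝ 1 p := by
    rw [hpfun]
    exact (hρ.pow 2).mul
      (((hu.fderiv_right (by norm_num)).comp (hρ.prodMk hs)).clm_apply contDiff_const)
  have hpd : DifferentiableAt ℝ p x := (hpC.differentiable one_ne_zero).differentiableAt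
  have Hinv : HasFDerivAt (fun y => (ρ y)⁻¹) ((-(ρ x ^ 2)⁻¹) • fderiv ℝ ρ x) x :=
    (hasDerivAt_inv hρx).comp_hasFDerivAt x hρd.hasFDerivAt
  have e0 : h = fun y => u (ρ y, s y) + p y * (ρ y)⁻¹ := by
    funext y; rw [hh y, div_eq_mul_inv]
  have hhd : DifferentiableAt ℝ h x := by
    rw [e0]; exact hUcomp.add (hpd.mul Hinv.differentiableAt)
  have keyh : ∀ i, pd i h x = T x * pd i s x + (ρ x)⁻¹ * pd i p x := by
    intro i
    rw [e0, pd_add hUcomp (hpd.fun_mul Hinv.differentiableAt),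
        pd_mul hpd Hinv.differentiableAt,
        pd_inv hρd hρx,
        pd_comp2 u hud hρd hsd, hp x, ← hT x]
    field_simp
    ring
  have hsq : ∀ j, DifferentiableAt ℝ (fun y => v y j * v y j) x :=
    fun j => (hvd j).mul (hvd j)
  have hdot : (fun y => 1/2 * (v y ⬝ᵥ v y))
      = (fun y => 1/2 * (v y 0 * v y 0 + (v y 1 * v y 1 + v y 2 * v y 2))) := by
    funext y
    simp [dotProduct, Fin.sum_univ_three]
    ring
  have hKd : DifferentiableAt ℝ (fun y => 1/2 * (v y ⬝ᵥ v y)) x := by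
    rw [hdot]
    exact (differentiableAt_const _).mul ((hsq 0).add ((hsq 1).add (hsq 2)))
  have keyK : ∀ i, pd i (fun y => 1/2 * (v y ⬝ᵥ v y)) x
      = v x 0 * pd i (fun y => v y 0) x + v x 1 * pd i (fun y => v y 1) x
        + v x 2 * pd i (fun y => v y 2) x := by
    intro i
    rw [hdot, pd_const_mul _ ((hsq 0).fun_add ((hsq 1).fun_add (hsq 2))),
        pd_add (hsq 0) ((hsq 1).fun_add (hsq 2)), pd_add (hsq 1) (hsq 2),
        pd_mul (hvd 0) (hvd 0), pd_mul (hvd 1) (hvd 1), pd_mul (hvd 2) (hvd 2)]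
    ring
  have kA : ∀ i, pd i (fun y => 1/2 * (v y ⬝ᵥ v y) + h y) x
      = v x 0 * pd i (fun y => v y 0) x + v x 1 * pd i (fun y => v y 1) x
        + v x 2 * pd i (fun y => v y 2) x + T x * pd i s x + (ρ x)⁻¹ * pd i p x := by
    intro i
    rw [pd_add hKd hhd, keyK i, keyh i]
    ring
  have kA' : ∀ i, grad (fun y => 1/2 * (v y ⬝ᵥ v y) + h y) x i
      = v x 0 * pd i (fun y => v y 0) x + v x 1 * pd i (fun y => v y 1) x
        + v x 2 * pd i (fun y => v y 2) x + T x * pd i s x + (ρ x)⁻¹ * pd i p x := kA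
  funext i
  simp only [Pi.sub_apply, Pi.add_apply, Pi.neg_apply, Pi.smul_apply, smul_eq_mul]
  rw [kA']
  fin_cases i <;>
    simp [vGrad, grad, cross, curl, Matrix.mulVec, dotProduct, Fin.sum_univ_three] <;>
    ring
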